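/- For |q|<1 and z ≠ 0, (-qz;q²)_∞ (-q/z;q²)_∞ (q²;q²)_∞ = Σ_{n=-∞}^{∞} z^n q^{n²} (Jacobi triple product identity). -/

import Mathlib

open Finset Filter Topology

def gb (Q : ℂ) : ℕ → ℕ → ℂ
  | 0, 0 => 1
  | 0, _+1 => 0
  | N+1, 0 => 1
  | N+1, k+1 => gb Q N k + Q^(k+1) * gb Q N (k+1)
def ee : ℕ → ℕ
  | 0 => 0
  | k+1 => ee k + k
lemma gb_zero_right (Q : ℂ) (N : ℕ) : gb Q N 0 = 1 := by cases N <;> rfl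
lemma gb_of_lt (Q : ℂ) : ∀ N k, N < k → gb Q N k = 0 := by
  intro N
  induction N with
  | zero => intro k hk; match k, hk with | (k+1), _ => rfl
  | succ N ih =>
    intro k hk
    match k, hk with
    | (k+1), hk =>
      show gb Q N k + Q^(k+1) * gb Q N (k+1) = 0
      rw [ih k (by omega), ih (k+1) (by omega)]; ring

lemma gb_diag (Q : ℂ) : ∀ N, gb Q N N = 1 := by
  intro N
  induction N with
  | zero => rfl
  | succ N ih =>
    show gb Q N N + Q^(N+1) * gb Q N (N+1) = 1
    rw [ih, gb_of_lt Q N (N+1) (by omega)]; ring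

theorem qbinom (Q : ℂ) : ∀ (N : ℕ) (x : ℂ),
    ∏ j ∈ range N, (1 + x * Q^j) = ∑ k ∈ range (N+1), gb Q N k * Q^(ee k) * x^k := by
  intro N
  induction N with
  | zero => intro x; simp [gb, ee]
  | succ N ih =>
    intro x
    rw [prod_range_succ']
    have h1 : ∀ j ∈ range N, (1 + x * Q^(j+1)) = (1 + (x*Q) * Q^j) := by
      intro j _; ring
    rw [prod_congr rfl h1, ih (x*Q)]
    set u : ℕ → ℂ := fun k => gb Q N k * Q^(ee k + k) * x^k with hu
    have hS : ∑ k ∈ range (N+1), gb Q N k * Q^(ee k) * (x*Q)^k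
        = ∑ k ∈ range (N+1), u k := by
      refine sum_congr rfl fun k _ => ?_
      rw [hu]; simp only; rw [mul_pow, pow_add]; ring
    have h6 : u 0 = 1 := by rw [hu]; simp [gb_zero_right, ee]
    have h5 : u (N+1) = 0 := by
      rw [hu]; simp only [gb_of_lt Q N (N+1) (by omega)]; ring
    have e1 : ∑ k ∈ range (N+1+1), gb Q (N+1) k * Q^(ee k) * x^k
        = ∑ k ∈ range (N+1), (u k * x + u (k+1)) + 1 := by
      rw [sum_range_succ']
      simp only [gb_zero_right, ee, pow_zero, mul_one]
      congr 1
      refine sum_congr rfl fun k _ => ?_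
      show (gb Q N k + Q^(k+1) * gb Q N (k+1)) * Q^(ee (k+1)) * x^(k+1) = _
      rw [hu]; simp only
      have h7 : ee (k+1) = ee k + k := rfl
      rw [h7]; ring
    have h3 : ∑ k ∈ range (N+1), u (k+1) = (∑ k ∈ range (N+1), u k) - 1 := by
      have h4 := sum_range_succ' u (N+1)
      rw [sum_range_succ u (N+1), h5, add_zero, h6] at h4
      linear_combination -h4
    rw [e1, hS, sum_add_distrib, h3, ← sum_mul]
    ring

lemma prod_zpow₀ {q : ℂ} (hq : q ≠ 0) (f : ℕ → ℤ) (s : Finset ℕ) :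
    ∏ i ∈ s, q ^ f i = q ^ (∑ i ∈ s, f i) := by
  classical
  induction s using Finset.induction with
  | empty => simp
  | insert _ _ h ih => rw [prod_insert h, sum_insert h, ih, zpow_add₀ hq]

lemma sum_exp : ∀ m : ℕ, (∑ j ∈ range m, (2*(j:ℤ)+1-2*(m:ℤ))) = -(m:ℤ)^2 := by
  intro m
  induction m with
  | zero => simp
  | succ m ih =>
    have h1 : ∀ j ∈ range (m+1), 2*(j:ℤ)+1-2*((m+1:ℕ):ℤ) = (2*(j:ℤ)+1-2*(m:ℤ)) - 2 := by
      intro j _; push_cast; ring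
    rw [sum_congr rfl h1, sum_sub_distrib, sum_range_succ, ih, sum_const, card_range]
    push_cast; ring

lemma blockA (q z : ℂ) (hq0 : q ≠ 0) (hz : z ≠ 0) (m : ℕ) :
    ∏ j ∈ range (2*m), (1 + (z * q^(1-2*(m:ℤ))) * (q^2)^j)
      = z^m * q^(-((m:ℤ)^2)) *
        ((∏ k ∈ range m, (1 + q/z * q^(2*k))) * ∏ k ∈ range m, (1 + q*z * q^(2*k))) := by
  rw [two_mul, prod_range_add]
  have hb2 : ∀ j ∈ range m,
      (1 + (z * q^(1-2*(m:ℤ))) * (q^2)^(m+j)) = (1 + q*z * q^(2*j)) := by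
    intro j _
    congr 1
    rw [← pow_mul, ← zpow_natCast q (2*(m+j)), mul_assoc, ← zpow_add₀ hq0]
    have h2 : (1 - 2*(m:ℤ)) + ((2*(m+j):ℕ):ℤ) = ((2*j+1 : ℕ):ℤ) := by push_cast; ring
    rw [h2, zpow_natCast, pow_succ]
    ring
  rw [prod_congr rfl hb2]
  have hb1 : ∀ j ∈ range m,
      (1 + (z * q^(1-2*(m:ℤ))) * (q^2)^j)
        = (z * q^(2*(j:ℤ)+1-2*(m:ℤ))) * (1 + q/z * q^(2*(m-1-j))) := by
    intro j hj
    rw [mem_range] at hj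
    obtain ⟨i, rfl⟩ : ∃ i, m = j + i + 1 := ⟨m-1-j, by omega⟩
    have h1 : j + i + 1 - 1 - j = i := by omega
    rw [h1]
    have key : z * q^(1-2*((j+i+1:ℕ):ℤ)) * (q^2)^j = z * q^(-(2*(i:ℤ))-1) := by
      rw [← pow_mul, ← zpow_natCast q (2*j), mul_assoc, ← zpow_add₀ hq0]
      congr 2
      push_cast; ring
    have key2 : (2*(j:ℤ)+1-2*((j+i+1:ℕ):ℤ)) = -(2*(i:ℤ))-1 := by push_cast; ring
    rw [key, key2]
    have hqq : q^(-(2*(i:ℤ))-1) * q^(2*i) * q = 1 := by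
      have hp : q^(2*i) * q = q^((2*i+1:ℕ)) := by rw [pow_succ]
      rw [mul_assoc, hp, ← zpow_natCast q (2*i+1), ← zpow_add₀ hq0,
        show (-(2*(i:ℤ))-1) + ((2*i+1:ℕ):ℤ) = 0 by push_cast; ring, zpow_zero]
    field_simp
    linear_combination (-1) * hqq
  rw [prod_congr rfl hb1, prod_mul_distrib, prod_mul_distrib, prod_const, card_range,
    prod_zpow₀ hq0, sum_exp, prod_range_reflect (fun k => 1 + q/z * q^(2*k)) m]
  ring

lemma two_mul_ee (k : ℕ) : 2 * ee k + k = k * k := by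
  induction k with
  | zero => rfl
  | succ k ih => show 2 * (ee k + k) + (k+1) = _; ring_nf; ring_nf at ih; omega

theorem finiteJTP (q z : ℂ) (hq0 : q ≠ 0) (hz : z ≠ 0) (m : ℕ) :
    (∏ k ∈ range m, (1 + q*z * q^(2*k))) * (∏ k ∈ range m, (1 + q/z * q^(2*k)))
      = ∑ k ∈ range (2*m+1), gb (q^2) (2*m) k * (z^((k:ℤ)-m) * q^(((k:ℤ)-m)^2)) := by
  have hqb := qbinom (q^2) (2*m) (z * q^(1-2*(m:ℤ)))
  rw [blockA q z hq0 hz m] at hqb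
  have hzm : z^m * q^(-((m:ℤ)^2)) ≠ 0 :=
    mul_ne_zero (pow_ne_zero m hz) (zpow_ne_zero _ hq0)
  apply mul_left_cancel₀ hzm
  have hre : z^m * q^(-((m:ℤ)^2)) * ((∏ k ∈ range m, (1 + q*z * q^(2*k))) * (∏ k ∈ range m, (1 + q/z * q^(2*k))))
      = z^m * q^(-((m:ℤ)^2)) * ((∏ k ∈ range m, (1 + q/z * q^(2*k))) * ∏ k ∈ range m, (1 + q*z * q^(2*k))) := by ring
  rw [hre, hqb, mul_sum]
  refine sum_congr rfl fun k hk => ?_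
  have hc : (2*(ee k):ℤ) + (k:ℤ) = (k:ℤ)*(k:ℤ) := by exact_mod_cast two_mul_ee k
  have e1 : (q^2)^(ee k) = q ^ ((2*(ee k):ℕ):ℤ) := by rw [← pow_mul, zpow_natCast]
  have e2 : (z * q^(1-2*(m:ℤ)))^k = z^((k:ℤ)) * q^((1-2*(m:ℤ))*(k:ℤ)) := by
    rw [mul_pow, ← zpow_natCast z k, ← zpow_natCast (q^(1-2*(m:ℤ))) k, ← zpow_mul]
  have hz1 : z^((k:ℤ)) = z^(m:ℕ) * z^((k:ℤ)-m) := by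
    rw [← zpow_natCast z m, ← zpow_add₀ hz]
    congr 1; ring
  have hq1 : q^(((2*(ee k):ℕ)):ℤ) * q^((1-2*(m:ℤ))*(k:ℤ)) = q^(-((m:ℤ)^2)) * q^(((k:ℤ)-m)^2) := by
    rw [← zpow_add₀ hq0, ← zpow_add₀ hq0]
    congr 1
    push_cast
    linear_combination hc
  rw [e1, e2, hz1]
  calc gb (q^2) (2*m) k * q^((2*(ee k):ℕ):ℤ) * (z^(m:ℕ) * z^((k:ℤ)-m) * q^((1-2*(m:ℤ))*(k:ℤ)))
      = gb (q^2) (2*m) k * (q^((2*(ee k):ℕ):ℤ) * q^((1-2*(m:ℤ))*(k:ℤ))) * (z^(m:ℕ) * z^((k:ℤ)-m)) := by ring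
    _ = _ := by rw [hq1]; ring

noncomputable def qf (Q : ℂ) (M : ℕ) : ℂ := ∏ j ∈ range M, (1 - Q^(j+1))

lemma qf_succ (Q : ℂ) (M : ℕ) : qf Q (M+1) = qf Q M * (1 - Q^(M+1)) := prod_range_succ _ _

theorem qf_mul_gb (Q : ℂ) : ∀ N k, k ≤ N → qf Q k * qf Q (N-k) * gb Q N k = qf Q N := by
  intro N
  induction N with
  | zero =>
    intro k hk
    interval_cases k
    simp [qf, gb]
  | succ N ih =>
    intro k hk
    match k with
    | 0 => simp [qf, gb_zero_right]
    | (k+1) =>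
      by_cases hkN : k + 1 ≤ N
      · obtain ⟨a, rfl⟩ : ∃ a, N = k+1+a := ⟨N-(k+1), by omega⟩
        have h1 : k+1+a+1-(k+1) = a+1 := by omega
        have h2 : k+1+a-k = a+1 := by omega
        have h3 : k+1+a-(k+1) = a := by omega
        have ih1 := ih k (by omega)
        have ih2 := ih (k+1) (by omega)
        rw [h2] at ih1; rw [h3] at ih2
        have hgb : gb Q (k+1+a+1) (k+1)
            = gb Q (k+1+a) k + Q^(k+1) * gb Q (k+1+a) (k+1) := rfl
        rw [h1, hgb, qf_succ Q (k+1+a), qf_succ Q k, qf_succ Q a] at *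
        linear_combination (1 - Q^(k+1)) * ih1 + Q^(k+1) * (1 - Q^(a+1)) * ih2
      · have hkN' : k = N := by omega
        rw [hkN']
        have hgb : gb Q (N+1) (N+1) = 1 := gb_diag Q (N+1)
        rw [hgb]
        have h0 : N+1-(N+1) = 0 := by omega
        rw [h0]
        simp [qf]


lemma mult_of_summable (a : ℕ → ℂ) (h : Summable fun k => ‖a k‖) :
    Multipliable (fun k => 1 + a k) := by
  by_cases hzero : ∃ k, 1 + a k = 0
  · obtain ⟨k0, hk0⟩ := hzero
    refine ⟨0, ?_⟩
    have hev : ∀ᶠ s : Finset ℕ in atTop, (0:ℂ) = ∏ i ∈ s, (1 + a i) := by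
      rw [eventually_atTop]
      exact ⟨{k0}, fun s hs => (Finset.prod_eq_zero (hs (Finset.mem_singleton_self k0)) hk0).symm⟩
    exact (tendsto_const_nhds.congr' hev)
  · push_neg at hzero
    have := multipliable_one_add_of_summable h
    · exact this

lemma summable_geom_c (q c : ℂ) (hq : ‖q‖ < 1) : Summable fun k : ℕ => ‖c * q^(2*k)‖ := by
  have : ∀ k : ℕ, ‖c * q^(2*k)‖ = ‖c‖ * (‖q‖^2)^k := by
    intro k; rw [norm_mul, norm_pow, pow_mul]
  rw [funext this]
  exact (summable_geometric_of_lt_one (by positivity) (by nlinarith [norm_nonneg q])).mul_left _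


lemma exp_neg_two_le (x : ℝ) (hx0 : 0 ≤ x) (hx2 : x ≤ 1/2) : Real.exp (-(2*x)) ≤ 1 - x := by
  have h1 := Real.add_one_le_exp (2*x)
  have h2 := Real.exp_pos (2*x)
  rw [Real.exp_neg]
  rw [inv_le_comm₀ h2 (by linarith : (0:ℝ) < 1 - x)]
  have h3 : (1-x)⁻¹ ≤ 1 + 2*x := by
    rw [inv_le_comm₀ (by linarith) (by linarith)]
    rw [inv_le_iff_one_le_mul₀ (by linarith)]
    nlinarith
  linarith

lemma geom_sum_le' (u : ℝ) (h0 : 0 ≤ u) (h1 : u < 1) (n : ℕ) :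
    ∑ j ∈ range n, u^j ≤ 1/(1-u) := by
  have := Summable.sum_le_tsum (range n) (fun i _ => pow_nonneg h0 i) (summable_geometric_of_lt_one h0 h1)
  rw [tsum_geometric_of_lt_one h0 h1] at this
  calc ∑ j ∈ range n, u^j ≤ (1-u)⁻¹ := this
    _ = 1/(1-u) := (one_div _).symm

lemma real_ub (u : ℝ) (h0 : 0 ≤ u) (h1 : u < 1) (M : ℕ) :
    ∏ j ∈ range M, (1 + u^(j+1)) ≤ Real.exp (u/(1-u)) := by
  have step : ∏ j ∈ range M, (1 + u^(j+1)) ≤ ∏ j ∈ range M, Real.exp (u^(j+1)) := by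
    refine prod_le_prod (fun j _ => by positivity) (fun j _ => ?_)
    have := Real.add_one_le_exp (u^(j+1))
    linarith
  refine step.trans ?_
  rw [← Real.exp_sum]
  apply Real.exp_le_exp.mpr
  have : ∀ j ∈ range M, u^(j+1) = u * u^j := fun j _ => pow_succ' u j
  rw [sum_congr rfl this, ← mul_sum, div_eq_mul_one_div]
  exact mul_le_mul_of_nonneg_left (geom_sum_le' u h0 h1 M) h0

lemma real_lb (u : ℝ) (h0 : 0 ≤ u) (h1 : u < 1) :
    ∃ A : ℝ, 0 < A ∧ ∀ M, A ≤ ∏ j ∈ range M, (1 - u^(j+1)) := by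
  have hlt : ∀ j : ℕ, u^(j+1) < 1 := fun j => pow_lt_one₀ h0 h1 (Nat.succ_ne_zero j)
  obtain ⟨J, hJ⟩ : ∃ J : ℕ, u^(J+1) ≤ 1/2 := by
    have := tendsto_pow_atTop_nhds_zero_of_lt_one h0 h1
    obtain ⟨J, hJ⟩ := (eventually_atTop).mp (this.eventually (ge_mem_nhds (by norm_num : (0:ℝ) < 1/2)))
    exact ⟨J, hJ (J+1) (by omega)⟩
  set c1 := ∏ j ∈ range J, (1 - u^(j+1)) with hc1
  have hc1pos : 0 < c1 := prod_pos fun j _ => by linarith [hlt j]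
  set c2 := Real.exp (-(2*(u^(J+1)/(1-u)))) with hc2
  have hc2pos : 0 < c2 := Real.exp_pos _
  have hc2le : c2 ≤ 1 := by
    rw [hc2, Real.exp_le_one_iff]
    have : 0 ≤ u^(J+1)/(1-u) := div_nonneg (pow_nonneg h0 _) (by linarith)
    linarith
  refine ⟨c1 * c2, mul_pos hc1pos hc2pos, fun M => ?_⟩
  by_cases hM : M ≤ J
  · have hsplit : c1 = (∏ j ∈ range M, (1 - u^(j+1))) * ∏ j ∈ range (J-M), (1 - u^(M+j+1)) := by
      rw [hc1, ← prod_range_add (fun j => (1 - u^(j+1))) M (J-M), show M + (J-M) = J by omega]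
    have hex : ∏ j ∈ range (J-M), (1 - u^(M+j+1)) ≤ 1 :=
      prod_le_one (fun j _ => by linarith [hlt (M+j)]) (fun j _ => by linarith [pow_nonneg h0 (M+j+1)])
    have h4 : c1 ≤ ∏ j ∈ range M, (1 - u^(j+1)) := by
      rw [hsplit]
      have hp : 0 ≤ ∏ j ∈ range M, (1 - u^(j+1)) := prod_nonneg fun j _ => by linarith [hlt j]
      nlinarith
    nlinarith
  · push_neg at hM
    have hsplit : ∏ j ∈ range M, (1 - u^(j+1))
        = c1 * ∏ j ∈ range (M-J), (1 - u^(J+j+1)) := by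
      rw [hc1, ← prod_range_add (fun j => (1 - u^(j+1))) J (M-J), show J + (M-J) = M by omega]
    rw [hsplit]
    refine mul_le_mul_of_nonneg_left ?_ hc1pos.le
    have hstep : ∀ j ∈ range (M-J), Real.exp (-(2*u^(J+j+1))) ≤ 1 - u^(J+j+1) := by
      intro j _
      refine exp_neg_two_le _ (pow_nonneg h0 _) ?_
      calc u^(J+j+1) ≤ u^(J+1) := pow_le_pow_of_le_one h0 h1.le (by omega)
        _ ≤ 1/2 := hJ
    calc c2 ≤ Real.exp (-(2 * ∑ j ∈ range (M-J), u^(J+j+1))) := by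
          rw [hc2]
          apply Real.exp_le_exp.mpr
          have hsum : ∑ j ∈ range (M-J), u^(J+j+1) ≤ u^(J+1)/(1-u) := by
            have : ∀ j ∈ range (M-J), u^(J+j+1) = u^(J+1) * u^j := by
              intro j _; rw [← pow_add]; congr 1; omega
            rw [sum_congr rfl this, ← mul_sum, div_eq_mul_one_div]
            exact mul_le_mul_of_nonneg_left (geom_sum_le' u h0 h1 _) (pow_nonneg h0 _)
          linarith
      _ ≤ ∏ j ∈ range (M-J), (1 - u^(J+j+1)) := by
          rw [mul_sum, ← sum_neg_distrib]
          rw [Real.exp_sum]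
          refine prod_le_prod (fun j _ => (Real.exp_pos _).le) (fun j hj => ?_)
          have := hstep j hj
          simpa using this

lemma qf_norm_ub (Q : ℂ) (hQ : ‖Q‖ < 1) (M : ℕ) : ‖qf Q M‖ ≤ Real.exp (‖Q‖/(1-‖Q‖)) := by
  rw [qf, norm_prod]
  refine le_trans (prod_le_prod (fun j _ => norm_nonneg _) (fun j _ => ?_))
    (real_ub ‖Q‖ (norm_nonneg Q) hQ M)
  calc ‖1 - Q^(j+1)‖ ≤ ‖(1:ℂ)‖ + ‖Q^(j+1)‖ := norm_sub_le _ _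
    _ = 1 + ‖Q‖^(j+1) := by rw [norm_one, norm_pow]

lemma qf_norm_lb (Q : ℂ) (hQ : ‖Q‖ < 1) : ∃ A : ℝ, 0 < A ∧ ∀ M, A ≤ ‖qf Q M‖ := by
  obtain ⟨A, hA, h⟩ := real_lb ‖Q‖ (norm_nonneg Q) hQ
  refine ⟨A, hA, fun M => (h M).trans ?_⟩
  rw [qf, norm_prod]
  refine prod_le_prod (fun j _ => ?_) (fun j _ => ?_)
  · have : ‖Q‖^(j+1) < 1 := pow_lt_one₀ (norm_nonneg Q) hQ (Nat.succ_ne_zero j)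
    linarith
  · calc 1 - ‖Q‖^(j+1) = 1 - ‖Q^(j+1)‖ := by rw [norm_pow]
      _ ≤ ‖1 - Q^(j+1)‖ := by
          have := norm_sub_norm_le (1:ℂ) (Q^(j+1))
          simpa using this

lemma gb_norm_le (Q : ℂ) (hQ : ‖Q‖ < 1) :
    ∃ C : ℝ, 0 < C ∧ ∀ N k, k ≤ N → ‖gb Q N k‖ ≤ C := by
  obtain ⟨A, hA, hAle⟩ := qf_norm_lb Q hQ
  set B := Real.exp (‖Q‖/(1-‖Q‖)) with hB
  have hBpos : 0 < B := Real.exp_pos _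
  refine ⟨B/(A*A), by positivity, fun N k hk => ?_⟩
  have h1 := congrArg norm (qf_mul_gb Q N k hk)
  rw [norm_mul, norm_mul] at h1
  rw [le_div_iff₀ (by positivity : (0:ℝ) < A*A)]
  calc ‖gb Q N k‖ * (A*A) ≤ ‖gb Q N k‖ * (‖qf Q k‖ * ‖qf Q (N-k)‖) := by
        refine mul_le_mul_of_nonneg_left ?_ (norm_nonneg _)
        exact mul_le_mul (hAle k) (hAle (N-k)) hA.le (norm_nonneg _)
    _ = ‖qf Q N‖ := by rw [← h1]; ring
    _ ≤ B := qf_norm_ub Q hQ N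


lemma summable_nat_aux (c r : ℝ) (hc : 0 < c) (hr0 : 0 < r) (hr : r < 1) :
    Summable (fun n : ℕ => c^n * r^(n^2)) := by
  apply summable_of_ratio_norm_eventually_le (r := 1/2) (by norm_num)
  have ht : Tendsto (fun n : ℕ => c * r^(2*n+1)) atTop (𝓝 0) := by
    have h1 : Tendsto (fun n : ℕ => r^(2*n+1)) atTop (𝓝 0) := by
      apply (tendsto_pow_atTop_nhds_zero_of_lt_one hr0.le hr).comp
      apply tendsto_atTop_mono (fun n => by omega : ∀ n : ℕ, n ≤ 2*n+1) tendsto_id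
    simpa using h1.const_mul c
  filter_upwards [(eventually_atTop).mpr ⟨0, fun _ _ => trivial⟩,
    ht.eventually (ge_mem_nhds (by norm_num : (0:ℝ) < 1/2))] with n _ hn
  have hpos : 0 < c^n * r^(n^2) := by positivity
  have heq : c^(n+1) * r^((n+1)^2) = (c * r^(2*n+1)) * (c^n * r^(n^2)) := by
    have h2 : (n+1)^2 = (2*n+1) + n^2 := by ring
    rw [h2, pow_add, pow_succ]
    ring
  rw [Real.norm_eq_abs, Real.norm_eq_abs, abs_of_pos (by positivity), abs_of_pos hpos, heq]
  exact mul_le_mul_of_nonneg_right hn hpos.le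

lemma summable_bound (c r D : ℝ) (hc : 0 < c) (hr0 : 0 < r) (hr : r < 1) :
    Summable (fun n : ℤ => D * (c^(n:ℤ) * r^(n.natAbs^2))) := by
  apply Summable.of_nat_of_neg
  · apply Summable.congr (((summable_nat_aux c r hc hr0 hr).mul_left D))
    intro n
    rw [zpow_natCast, Int.natAbs_natCast]
  · apply Summable.congr (((summable_nat_aux c⁻¹ r (by positivity) hr0 hr).mul_left D))
    intro n
    rw [zpow_neg, zpow_natCast, inv_pow, Int.natAbs_neg, Int.natAbs_natCast]


/-- The Jacobi triple product identity: for `|q| < 1` and `z ≠ 0`,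
`(-qz;q²)_∞ (-q/z;q²)_∞ (q²;q²)_∞ = Σ_{n ∈ ℤ} z^n q^{n²}`. -/
theorem stmt4 (q z : ℂ) (hq : ‖q‖ < 1) (hz : z ≠ 0) :
    (∏' k : ℕ, (1 + q * z * q ^ (2 * k))) * (∏' k : ℕ, (1 + q / z * q ^ (2 * k))) *
      (∏' k : ℕ, (1 - q ^ (2 * (k + 1))))
    = ∑' n : ℤ, z ^ n * q ^ (n ^ 2) := by
  by_cases hq0 : q = 0
  · subst hq0
    have e1 : (fun k : ℕ => 1 + (0:ℂ) * z * 0 ^ (2 * k)) = fun _ => 1 := by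
      funext k; simp
    have e2 : (fun k : ℕ => 1 + (0:ℂ) / z * 0 ^ (2 * k)) = fun _ => 1 := by
      funext k; simp
    have e3 : (fun k : ℕ => 1 - (0:ℂ) ^ (2 * (k + 1))) = fun _ => (1:ℂ) := by
      funext k; rw [zero_pow (by omega : 2*(k+1) ≠ 0)]; ring
    rw [e1, e2, e3, tprod_one]
    have e4 : ∑' n : ℤ, z ^ n * (0:ℂ) ^ (n ^ 2) = 1 := by
      rw [tsum_eq_single 0 (fun n hn => by rw [zero_zpow _ (pow_ne_zero 2 hn)]; ring)]
      norm_num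
    rw [e4]; norm_num
  · have hr0 : 0 < ‖q‖ := norm_pos_iff.mpr hq0
    have hQ : ‖q^2‖ < 1 := by rw [norm_pow]; nlinarith
    have M1 : Multipliable (fun k : ℕ => 1 + q*z*q^(2*k)) :=
      mult_of_summable _ (summable_geom_c q (q*z) hq)
    have M2 : Multipliable (fun k : ℕ => 1 + q/z*q^(2*k)) :=
      mult_of_summable _ (summable_geom_c q (q/z) hq)
    have M3 : Multipliable (fun j : ℕ => 1 - (q^2)^(j+1)) := by
      refine (mult_of_summable (fun j => -((q^2)^(j+1))) ?_).congr (fun j => by ring)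
      have h1 : ∀ j : ℕ, ‖-((q^2)^(j+1))‖ = ‖q^2‖ * ‖q^2‖^j := by
        intro j; rw [norm_neg, norm_pow, pow_succ']
      rw [funext h1]
      exact (summable_geometric_of_lt_one (norm_nonneg _) hQ).mul_left _
    set P : ℂ := ∏' j : ℕ, (1 - (q^2)^(j+1)) with hPdef
    have hqf_t : Tendsto (fun M => qf (q^2) M) atTop (𝓝 P) := M3.hasProd.tendsto_prod_nat
    obtain ⟨A, hApos, hAle⟩ := qf_norm_lb (q^2) hQ
    have hqfne : ∀ M, qf (q^2) M ≠ 0 := by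
      intro M h
      have := hAle M
      rw [h, norm_zero] at this
      linarith
    have hPnorm : A ≤ ‖P‖ := ge_of_tendsto' hqf_t.norm hAle
    have hPne : P ≠ 0 := by
      intro h; rw [h, norm_zero] at hPnorm; linarith
    obtain ⟨C, hCpos, hCle⟩ := gb_norm_le (q^2) hQ
    have hbs : Summable (fun n : ℤ => (C * ‖P‖) * (‖z‖^(n:ℤ) * ‖q‖^(n.natAbs^2))) :=
      summable_bound ‖z‖ ‖q‖ (C * ‖P‖) (norm_pos_iff.mpr hz) hr0 hq
    have hnormq : ∀ n : ℤ, q^(n^2) = q^(n.natAbs^2 : ℕ) := by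
      intro n
      rw [← zpow_natCast q (n.natAbs^2)]
      congr 1
      rw [Nat.cast_pow, Int.natAbs_sq]
    set t : ℕ → ℤ → ℂ := fun m n =>
      if n.natAbs ≤ m then gb (q^2) (2*m) ((n+m).toNat) * (z^n * q^(n^2)) * P else 0 with htdef
    have key : ∀ m, ∑' n : ℤ, t m n
        = ((∏ k ∈ range m, (1 + q*z*q^(2*k))) * ∏ k ∈ range m, (1 + q/z*q^(2*k))) * P := by
      intro m
      have h0 : ∀ n ∉ Finset.Icc (-(m:ℤ)) (m:ℤ), t m n = 0 := by
        intro n hn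
        rw [Finset.mem_Icc] at hn
        exact if_neg (by omega)
      rw [tsum_eq_sum h0]
      have hbij : ∑ n ∈ Finset.Icc (-(m:ℤ)) (m:ℤ), t m n
          = ∑ k ∈ range (2*m+1), gb (q^2) (2*m) k * (z^((k:ℤ)-m) * q^(((k:ℤ)-m)^2)) * P := by
        refine Finset.sum_nbij' (fun n => (n + m).toNat) (fun k => (k:ℤ) - m)
          ?_ ?_ ?_ ?_ ?_
        · intro n hn; rw [Finset.mem_Icc] at hn; rw [mem_range]; omega
        · intro k hk; rw [mem_range] at hk; rw [Finset.mem_Icc]; omega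
        · intro n hn; rw [Finset.mem_Icc] at hn; omega
        · intro k hk; rw [mem_range] at hk; omega
        · intro n hn
          rw [Finset.mem_Icc] at hn
          rw [htdef]
          simp only
          rw [if_pos (by omega)]
          have h1 : (((n + m).toNat : ℤ)) - m = n := by omega
          rw [h1]
      rw [hbij, ← sum_mul, ← finiteJTP q z hq0 hz m]
    have hab : ∀ n : ℤ, Tendsto (fun m => t m n) atTop (𝓝 (z^n * q^(n^2))) := by
      intro n
      have hta : Tendsto (fun m : ℕ => (n + m).toNat) atTop atTop := by
        rw [tendsto_atTop_atTop]
        exact fun b => ⟨b + n.natAbs, fun a ha => by omega⟩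
      have htb : Tendsto (fun m : ℕ => ((m:ℤ) - n).toNat) atTop atTop := by
        rw [tendsto_atTop_atTop]
        exact fun b => ⟨b + n.natAbs, fun a ha => by omega⟩
      have htc : Tendsto (fun m : ℕ => 2*m) atTop atTop :=
        tendsto_atTop_mono (fun m => by dsimp only [id]; omega) tendsto_id
      have hd := Tendsto.div (hqf_t.comp htc) ((hqf_t.comp hta).mul (hqf_t.comp htb))
        (mul_ne_zero hPne hPne)
      have hlim := hd.mul_const (z^n * q^(n^2) * P)
      have hval : P / (P*P) * (z^n * q^(n^2) * P) = z^n * q^(n^2) := by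
        field_simp
      rw [hval] at hlim
      refine hlim.congr' ?_
      filter_upwards [eventually_ge_atTop n.natAbs] with m hm
      have hk : (n + m).toNat ≤ 2*m := by omega
      have h2 : 2*m - (n + m).toNat = ((m:ℤ) - n).toNat := by omega
      have h3 := qf_mul_gb (q^2) (2*m) ((n + m).toNat) hk
      rw [h2] at h3
      have hne : qf (q^2) ((n + m).toNat) * qf (q^2) (((m:ℤ) - n).toNat) ≠ 0 :=
        mul_ne_zero (hqfne _) (hqfne _)
      have hgb : gb (q^2) (2*m) ((n + m).toNat)
          = qf (q^2) (2*m) / (qf (q^2) ((n + m).toNat) * qf (q^2) (((m:ℤ) - n).toNat)) := by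
        rw [eq_div_iff hne]
        linear_combination h3
      rw [htdef]
      simp only [Pi.div_apply, Function.comp_apply]
      rw [if_pos (by omega : n.natAbs ≤ m), hgb]
      ring
    have hb : ∀ᶠ m in atTop, ∀ n : ℤ,
        ‖t m n‖ ≤ (C * ‖P‖) * (‖z‖^(n:ℤ) * ‖q‖^(n.natAbs^2)) := by
      refine Filter.Eventually.of_forall (fun m => fun n => ?_)
      rw [htdef]
      simp only
      by_cases hmn : n.natAbs ≤ m
      · rw [if_pos hmn, norm_mul, norm_mul, norm_mul, norm_zpow, hnormq n, norm_pow]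
        have h5 : ‖gb (q^2) (2*m) ((n + m).toNat)‖ ≤ C := hCle _ _ (by omega)
        calc ‖gb (q^2) (2*m) ((n + m).toNat)‖ * (‖z‖^(n:ℤ) * ‖q‖^(n.natAbs^2)) * ‖P‖
            = ((‖z‖^(n:ℤ) * ‖q‖^(n.natAbs^2)) * ‖P‖) * ‖gb (q^2) (2*m) ((n + m).toNat)‖ := by
              ring
          _ ≤ ((‖z‖^(n:ℤ) * ‖q‖^(n.natAbs^2)) * ‖P‖) * C := by
              refine mul_le_mul_of_nonneg_left h5 ?_
              have hz1 : (0:ℝ) ≤ ‖z‖^(n:ℤ) := zpow_nonneg (norm_nonneg z) n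
              positivity
          _ = (C * ‖P‖) * (‖z‖^(n:ℤ) * ‖q‖^(n.natAbs^2)) := by ring
      · rw [if_neg hmn, norm_zero]
        have hz1 : (0:ℝ) ≤ ‖z‖^(n:ℤ) := zpow_nonneg (norm_nonneg z) n
        positivity
    have htan := tendsto_tsum_of_dominated_convergence hbs hab hb
    have hseq : Tendsto (fun m =>
        ((∏ k ∈ range m, (1 + q*z*q^(2*k))) * ∏ k ∈ range m, (1 + q/z*q^(2*k))) * P) atTop
        (𝓝 (((∏' k : ℕ, (1 + q*z*q^(2*k))) * ∏' k : ℕ, (1 + q/z*q^(2*k))) * P)) :=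
      ((M1.hasProd.tendsto_prod_nat).mul (M2.hasProd.tendsto_prod_nat)).mul_const P
    have hfinal := tendsto_nhds_unique (htan.congr key) hseq
    have hT3 : (∏' k : ℕ, (1 - q^(2*(k+1)))) = P := by
      rw [hPdef]
      exact tprod_congr (fun k => by rw [pow_mul])
    rw [hT3]
    exact hfinal.symm
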